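/- Hermiticity, positivity and ground state of the kinetic-model Hamiltonian: Let S be a nonempty finite type, W : S → S → ℝ with W(σ,σ') ≥ 0 for all σ,σ', H : S → ℝ, and β ∈ ℝ, and assume detailed balance: W(σ,σ')·exp(−β·H(σ')) = W(σ',σ)·exp(−β·H(σ)) for all σ,σ'. Define the real matrix M indexed by S with entries M(σ,σ') = (if σ = σ' then ∑_{σ''} W(σ'',σ) else 0) − exp(β·H(σ)/2)·W(σ,σ')·exp(−β·H(σ')/2). Then: (i) M is symmetric; (ii) the vector v with v(σ) = exp(−β·H(σ)/2) satisfies M·v = 0; and (iii) M is positive semidefinite, i.e. ∑_{σ,σ'} x(σ)·M(σ,σ')·x(σ') ≥ 0 for every x : S → ℝ. -/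

import Mathlib

open scoped BigOperators

/-- The Hamiltonian matrix of a classical kinetic model, obtained from the master equation
by the similarity transformation `ψ(σ) = exp(β·H(σ)/2)·P(σ)`:
`M(σ,σ') = (if σ = σ' then ∑_{σ''} W(σ'',σ) else 0) − e^{βH(σ)/2}·W(σ,σ')·e^{−βH(σ')/2}`. -/
noncomputable def kineticHamiltonian {S : Type*} [Fintype S] [DecidableEq S]
    (W : S → S → ℝ) (H : S → ℝ) (β : ℝ) : Matrix S S ℝ :=
  fun σ σ' => (if σ = σ' then ∑ σ'', W σ'' σ else 0)
    - Real.exp (β * H σ / 2) * W σ σ' * Real.exp (-(β * H σ' / 2))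

/-- **Hermiticity, positivity and ground state of the kinetic-model Hamiltonian.** Under
detailed balance, the matrix `M` of the transformed master equation is (i) symmetric,
(ii) annihilates the vector `v(σ) = e^{−βH(σ)/2}` (the Gibbs ground state), and (iii) is
positive semidefinite. -/
theorem kineticHamiltonian_symm_groundState_posSemidef
    (S : Type*) [Fintype S] [DecidableEq S] [Nonempty S]
    (W : S → S → ℝ) (hW : ∀ σ σ', 0 ≤ W σ σ') (H : S → ℝ) (β : ℝ)
    (hdb : ∀ σ σ', W σ σ' * Real.exp (-(β * H σ')) = W σ' σ * Real.exp (-(β * H σ))) :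
    (kineticHamiltonian W H β).IsSymm ∧
    (kineticHamiltonian W H β).mulVec (fun σ => Real.exp (-(β * H σ / 2))) = 0 ∧
    ∀ x : S → ℝ, 0 ≤ ∑ σ, ∑ σ', x σ * kineticHamiltonian W H β σ σ' * x σ' := by
  classical
  set E : S → ℝ := fun σ => Real.exp (β * H σ / 2) with hE
  have hEpos : ∀ σ, 0 < E σ := fun σ => Real.exp_pos _
  have hEne : ∀ σ, E σ ≠ 0 := fun σ => (hEpos σ).ne'
  have hEneg : ∀ σ, Real.exp (-(β * H σ / 2)) = (E σ)⁻¹ := fun σ => by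
    rw [Real.exp_neg]
  have hEfull : ∀ σ, Real.exp (-(β * H σ)) = ((E σ) ^ 2)⁻¹ := fun σ => by
    rw [Real.exp_neg]
    congr 1
    rw [sq, ← Real.exp_add]
    congr 1
    ring
  have hdb2 : ∀ σ σ', W σ σ' * (E σ) ^ 2 = W σ' σ * (E σ') ^ 2 := by
    intro σ σ'
    have h := hdb σ σ'
    rw [hEfull, hEfull] at h
    field_simp [hEne σ, hEne σ'] at h
    linarith [h]
  have hM : ∀ σ σ', kineticHamiltonian W H β σ σ'
      = (if σ = σ' then ∑ σ'', W σ'' σ else 0) - E σ * W σ σ' * (E σ')⁻¹ := by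
    intro σ σ'
    unfold kineticHamiltonian
    rw [hEneg]
  refine ⟨?_, ?_, ?_⟩
  · rw [Matrix.IsSymm]
    ext σ σ'
    rw [Matrix.transpose_apply, hM, hM]
    by_cases h : σ = σ'
    · subst h; rfl
    · rw [if_neg h, if_neg (fun hh => h hh.symm)]
      have h2 := hdb2 σ σ'
      field_simp [hEne σ, hEne σ']
      linear_combination h2
  · funext σ
    show ∑ σ', kineticHamiltonian W H β σ σ' * Real.exp (-(β * H σ' / 2)) = 0
    have step : ∀ σ', kineticHamiltonian W H β σ σ' * Real.exp (-(β * H σ' / 2))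
        = (if σ = σ' then ∑ σ'', W σ'' σ else 0) * (E σ')⁻¹ - W σ' σ * (E σ)⁻¹ := by
      intro σ'
      rw [hM, hEneg, sub_mul]
      congr 1
      have h2 := hdb2 σ σ'
      field_simp [hEne σ, hEne σ']
      linear_combination h2
    rw [Finset.sum_congr rfl (fun σ' _ => step σ')]
    rw [Finset.sum_sub_distrib]
    simp only [ite_mul, zero_mul, Finset.sum_ite_eq, Finset.mem_univ, if_true,
      ← Finset.sum_mul, sub_self]
  · intro x
    set y : S → ℝ := fun σ => x σ * E σ with hy
    set c : S → S → ℝ := fun σ σ' => W σ σ' * ((E σ') ^ 2)⁻¹ with hc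
    have hcsymm : ∀ σ σ', c σ σ' = c σ' σ := by
      intro σ σ'
      simp only [hc]
      have h2 := hdb2 σ σ'
      field_simp [hEne σ, hEne σ']
      linear_combination h2
    have hcnonneg : ∀ σ σ', 0 ≤ c σ σ' := by
      intro σ σ'
      exact mul_nonneg (hW σ σ') (by positivity)
    have hQ : ∑ σ, ∑ σ', x σ * kineticHamiltonian W H β σ σ' * x σ'
        = (∑ σ, ∑ σ', c σ σ' * y σ ^ 2) - ∑ σ, ∑ σ', c σ σ' * (y σ * y σ') := by
      rw [← Finset.sum_sub_distrib]
      refine Finset.sum_congr rfl (fun σ _ => ?_)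
      have e1 : ∀ σ', x σ * kineticHamiltonian W H β σ σ' * x σ'
          = (if σ = σ' then (∑ σ'', W σ'' σ) * x σ ^ 2 else 0) - c σ σ' * (y σ * y σ') := by
        intro σ'
        rw [hM]
        by_cases h : σ = σ'
        · subst h
          rw [if_pos rfl, if_pos rfl]
          simp only [hc, hy]
          field_simp
        · rw [if_neg h, if_neg h]
          simp only [hc, hy]
          field_simp
          ring
      rw [Finset.sum_congr rfl (fun σ' _ => e1 σ'), Finset.sum_sub_distrib]
      congr 1
      rw [Finset.sum_ite_eq Finset.univ σ (fun _ => (∑ σ'', W σ'' σ) * x σ ^ 2)]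
      simp only [Finset.mem_univ, if_true]
      rw [Finset.sum_mul]
      refine Finset.sum_congr rfl (fun σ'' _ => ?_)
      simp only [hc, hy]
      field_simp [hEne σ, hEne σ'']
      linear_combination -x σ ^ 2 * hdb2 σ σ''
    have hswap : (∑ σ, ∑ σ', c σ σ' * y σ' ^ 2) = ∑ σ, ∑ σ', c σ σ' * y σ ^ 2 := by
      rw [Finset.sum_comm]
      exact Finset.sum_congr rfl fun σ _ => Finset.sum_congr rfl fun σ' _ => by
        rw [hcsymm]
    have expand : (∑ σ, ∑ σ', c σ σ' * (y σ - y σ') ^ 2)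
        = (∑ σ, ∑ σ', c σ σ' * y σ ^ 2) + (∑ σ, ∑ σ', c σ σ' * y σ' ^ 2)
          - 2 * ∑ σ, ∑ σ', c σ σ' * (y σ * y σ') := by
      have e2 : ∀ σ σ', c σ σ' * (y σ - y σ') ^ 2
          = c σ σ' * y σ ^ 2 + c σ σ' * y σ' ^ 2 - 2 * (c σ σ' * (y σ * y σ')) := by
        intro σ σ'; ring
      rw [Finset.sum_congr rfl fun σ _ => Finset.sum_congr rfl fun σ' _ => e2 σ σ']
      simp only [Finset.sum_sub_distrib, Finset.sum_add_distrib, Finset.mul_sum]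
    have hnn : 0 ≤ ∑ σ, ∑ σ', c σ σ' * (y σ - y σ') ^ 2 :=
      Finset.sum_nonneg fun σ _ => Finset.sum_nonneg fun σ' _ =>
        mul_nonneg (hcnonneg σ σ') (sq_nonneg _)
    linarith [hQ, hswap, expand, hnn]
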